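/- The isomorphism class of the Yamada cochain complex C_Y(G) is independent of the chosen ordering of the edges of G: if σ is a permutation of the edge labels, then the map f: C^i(G) → C^i(G_σ) defined on the summand indexed by S ⊆ E with |S| = i as −id if (for σ a transposition (k,k+1)) both edges e_k and e_{k+1} lie in S, and id otherwise, is an isomorphism of cochain complexes. -/

import Mathlib

/-- A finite multigraph (loops and parallel edges allowed), with a chosen
orientation of each edge given by source and target maps. -/
structure Multigraph where
  V : Type
  E : Type
  [fintypeV : Fintype V]
  [fintypeE : Fintype E]
  [decEqV : DecidableEq V]
  [decEqE : DecidableEq E]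
  src : E → V
  tgt : E → V

attribute [instance] Multigraph.fintypeV Multigraph.fintypeE
  Multigraph.decEqV Multigraph.decEqE

namespace Multigraph

variable (G : Multigraph)

/-- Two vertices are directly joined by an edge of the spanning subgraph `[G:S]`. -/
def connRel (S : Finset G.E) (a b : G.V) : Prop :=
  ∃ e ∈ S, (G.src e = a ∧ G.tgt e = b)

/-- The "same connected component of `[G:S]`" equivalence relation. -/
def connSetoid (S : Finset G.E) : Setoid G.V := Relation.EqvGen.setoid (G.connRel S)

/-- The set of connected components of the spanning subgraph `[G:S]`. -/
def Comp (S : Finset G.E) : Type := Quotient (G.connSetoid S)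

noncomputable instance (S : Finset G.E) : Fintype (G.Comp S) := by
  classical exact Quotient.fintype _

noncomputable instance (S : Finset G.E) : DecidableEq (G.Comp S) :=
  Classical.decEq _

/-- `b₀([G:S])`: the number of connected components of the spanning subgraph `[G:S]`. -/
noncomputable def b0 (S : Finset G.E) : ℕ := Fintype.card (G.Comp S)

/-- The simplicial boundary map `ℚ^S → ℚ^V`, sending an edge to (target − source). -/
noncomputable def boundary (S : Finset G.E) : ((↥S) → ℚ) →ₗ[ℚ] (G.V → ℚ) :=
  ∑ e : ↥S, LinearMap.smulRight (LinearMap.proj e)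
    (fun v => (if G.tgt e.1 = v then (1 : ℚ) else 0) - (if G.src e.1 = v then 1 else 0))

/-- `b₁([G:S])`: the first Betti number of `[G:S]`, i.e. the rank of its cycle space. -/
noncomputable def b1 (S : Finset G.E) : ℕ :=
  Module.finrank ℚ (LinearMap.ker (G.boundary S))

end Multigraph

/-- The pushforward of free `ℤ`-modules along a partially defined map of bases:
a basis element `a` is sent to `g a` if defined, and to `0` otherwise. -/
noncomputable def pushMap {α β : Type*} [Fintype α] [DecidableEq β]
    (g : α → Option β) : (α → ℤ) →ₗ[ℤ] (β → ℤ) where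
  toFun φ b := ∑ a : α, if g a = some b then φ a else 0
  map_add' φ ψ := by
    funext b
    simp only [Pi.add_apply]
    rw [← Finset.sum_add_distrib]
    refine Finset.sum_congr rfl fun a _ => ?_
    by_cases h : g a = some b <;> simp [h]
  map_smul' c φ := by
    funext b
    rw [RingHom.id_apply, Pi.smul_apply, smul_eq_mul, Finset.mul_sum]
    refine Finset.sum_congr rfl fun a _ => ?_
    by_cases h : g a = some b <;> simp [h]

namespace Multigraph

variable (G : Multigraph)

/-- The standard `ℤ`-basis of `C^S(G) = A^{⊗|S|} ⊗ A^{⊗b₀([G:S])} ⊗ B^{⊗b₁([G:S])}`,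
where `A = ℤ[t]/(t²)` and `B = ℤ[w]/(w²)`:  a factor of `A` (basis `{1, t}`) for
each edge of `S` and each component of `[G:S]`, and a factor of `B` (basis
`{1, w}`) for each of the `b₁([G:S])` independent cycles.  `false` encodes
`1` and `true` encodes `t` (resp. `w`). -/
abbrev YBasis (S : Finset G.E) : Type :=
  (↥S → Bool) × (G.Comp S → Bool) × (Fin (G.b1 S) → Bool)

/-- The chain module `C^S(G)`, the free `ℤ`-module on `YBasis G S`. -/
abbrev Cmod (S : Finset G.E) : Type := G.YBasis S → ℤ

/-- The natural map on components induced by `T.erase e ⊆ T`. -/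
def compPush (T : Finset G.E) (e : G.E) : G.Comp (T.erase e) → G.Comp T :=
  Quotient.map id (by
    intro a b hab
    refine Relation.EqvGen.mono ?_ a b hab
    rintro x y ⟨e', he', hx, hy⟩
    exact ⟨e', Finset.mem_of_mem_erase he', hx, hy⟩)

/-- Multiplication `A ⊗ A → A` along a merging of components, as a partially
defined map of bases: the result is undefined (`0`) when two merged components
both carry `t` (since `t² = 0`), and otherwise the resulting component carries
`t` iff some preimage component does. -/
noncomputable def mergeMap (T : Finset G.E) (e : G.E)
    (b : G.Comp (T.erase e) → Bool) : Option (G.Comp T → Bool) :=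
  if ∃ c c' : G.Comp (T.erase e),
      c ≠ c' ∧ G.compPush T e c = G.compPush T e c' ∧ b c ∧ b c' then
    none
  else
    some fun d => decide (∃ c, G.compPush T e c = d ∧ b c)

/-- Inserting the unit `1 ∈ A` in the tensor factor of the new edge `e`. -/
def edgeExt (T : Finset G.E) (e : G.E) (a : ↥(T.erase e) → Bool) : ↥T → Bool :=
  fun x => if hx : x.1 = e then false
    else a ⟨x.1, Finset.mem_erase.mpr ⟨hx, x.2⟩⟩

/-- The map `B^{⊗ν₀} → B^{⊗ν₁}` on bases: the identity when `ν₁ = ν₀`, and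
appending a unit `1 ∈ B` in a new last factor when `ν₁ = ν₀ + 1`. -/
def cycExt (ν₀ ν₁ : ℕ) (c : Fin ν₀ → Bool) : Fin ν₁ → Bool :=
  fun i => if h : (i : ℕ) < ν₀ then c ⟨i, h⟩ else false

/-- The per-edge map `d_ξ` on bases, for the cube edge `ξ` joining
`S₀ = T.erase e` to `S₁ = T`. -/
noncomputable def basisStep (T : Finset G.E) (e : G.E) :
    G.YBasis (T.erase e) → Option (G.YBasis T) :=
  fun v => (G.mergeMap T e v.2.1).map
    (fun b' => (G.edgeExt T e v.1, b', cycExt (G.b1 (T.erase e)) (G.b1 T) v.2.2))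

/-- The per-edge map `d_ξ : C^{T∖e}(G) → C^T(G)`. -/
noncomputable def stepMap (T : Finset G.E) (e : G.E) :
    G.Cmod (T.erase e) →ₗ[ℤ] G.Cmod T :=
  pushMap (G.basisStep T e)

/-- The `i`-th chain module `C^i(G) = ⊕_{|S| = i} C^S(G)`. -/
abbrev Cchain (i : ℕ) : Type :=
  (S : {S : Finset G.E // S.card = i}) → G.Cmod S.1

/-- The differential `d^i : C^i(G) → C^{i+1}(G)`, where the edge ordering is
given by an injective labelling `π : E → ℕ`;  the per-edge map for adding the
edge `e` to `S₀` enters with the sign `(−1)^{#{x ∈ S₀ : π x < π e}}`. -/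
noncomputable def diff (π : G.E → ℕ) (i : ℕ) :
    G.Cchain i →ₗ[ℤ] G.Cchain (i + 1) :=
  LinearMap.pi fun T =>
    ∑ e ∈ T.1.attach,
      ((-1 : ℤ) ^ (((T.1.erase e.1).filter (fun x => π x < π e.1)).card)) •
        ((G.stepMap T.1 e.1).comp
          (LinearMap.proj
            (⟨T.1.erase e.1, by
              simp [Finset.card_erase_of_mem e.2, T.2]⟩ :
              {S : Finset G.E // S.card = i})))

end Multigraph

namespace Multigraph

open Classical in
/-- The comparison map `f : C^i(G) → C^i(G_σ)` for the adjacent transposition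
`σ = (k, k+1)` of edge labels: on the summand indexed by `S` it is `−id` when
both edges labelled `k` and `k+1` belong to `S`, and `id` otherwise. -/
noncomputable def relabelMap (G : Multigraph) (π : G.E → ℕ) (k : ℕ) (i : ℕ) :
    G.Cchain i →ₗ[ℤ] G.Cchain i :=
  LinearMap.pi fun T =>
    (if (∃ e ∈ T.1, π e = k) ∧ (∃ e ∈ T.1, π e = k + 1) then (-1 : ℤ) else 1) •
      LinearMap.proj T

end Multigraph


lemma swap_succ_lt_iff (k a b : ℕ) (hb : b ≠ k) (hb' : b ≠ k + 1) :
    Equiv.swap k (k + 1) a < Equiv.swap k (k + 1) b ↔ a < b := by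
  rw [Equiv.swap_apply_of_ne_of_ne hb hb']
  by_cases ha : a = k
  · subst ha; rw [Equiv.swap_apply_left]; omega
  by_cases ha' : a = k + 1
  · subst ha'; rw [Equiv.swap_apply_right]; omega
  · rw [Equiv.swap_apply_of_ne_of_ne ha ha']

open Classical in
lemma card_filter_label {α : Type*} (S : Finset α) (π : α → ℕ)
    (hπ : Function.Injective π) (m : ℕ) :
    (S.filter (fun x => π x = m)).card = if ∃ x ∈ S, π x = m then 1 else 0 := by
  split_ifs with h
  · obtain ⟨x, hx, hpx⟩ := h
    have hs : S.filter (fun x => π x = m) = {x} := by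
      ext y
      simp only [Finset.mem_filter, Finset.mem_singleton]
      constructor
      · rintro ⟨hy, hpy⟩; exact hπ (hpy.trans hpx.symm)
      · rintro rfl; exact ⟨hx, hpx⟩
    rw [hs, Finset.card_singleton]
  · push_neg at h
    rw [Finset.filter_eq_empty_iff.mpr fun x hx => h x hx, Finset.card_empty]

open Classical in
lemma key_sign {α : Type*} [DecidableEq α] (π π' : α → ℕ)
    (hπ : Function.Injective π) (k : ℕ)
    (hπ' : ∀ x, π' x = Equiv.swap k (k + 1) (π x))
    (T : Finset α) (e : α) (he : e ∈ T) :
    (if (∃ x ∈ T, π x = k) ∧ (∃ x ∈ T, π x = k + 1) then (-1 : ℤ) else 1) *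
      (-1) ^ (((T.erase e).filter (fun x => π x < π e)).card)
    = (-1) ^ (((T.erase e).filter (fun x => π' x < π' e)).card) *
      (if (∃ x ∈ T.erase e, π x = k) ∧ (∃ x ∈ T.erase e, π x = k + 1)
        then (-1 : ℤ) else 1) := by
  by_cases hek : π e = k
  · -- π e = k : new label of e is k + 1
    have hS1 : ¬ ∃ x ∈ T.erase e, π x = k := by
      rintro ⟨x, hx, hpx⟩
      exact (Finset.mem_erase.mp hx).1 (hπ (hpx.trans hek.symm))
    have hA_T : ∃ x ∈ T, π x = k := ⟨e, he, hek⟩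
    have hfc : (T.erase e).filter (fun x => π' x < π' e)
        = (T.erase e).filter (fun x => π x < π e ∨ π x = k + 1) := by
      refine Finset.filter_congr fun x hx => ?_
      have hxk : π x ≠ k := fun h =>
        (Finset.mem_erase.mp hx).1 (hπ (h.trans hek.symm))
      rw [hπ', hπ', hek, Equiv.swap_apply_left]
      by_cases hxk1 : π x = k + 1
      · rw [hxk1, Equiv.swap_apply_right]; simp
      · rw [Equiv.swap_apply_of_ne_of_ne hxk hxk1]; omega
    have hdisj : Disjoint ((T.erase e).filter (fun x => π x < π e))
        ((T.erase e).filter (fun x => π x = k + 1)) := by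
      rw [Finset.disjoint_left]
      intro x hx hx'
      simp only [Finset.mem_filter] at hx hx'
      omega
    have hTS : (∃ x ∈ T, π x = k + 1) ↔ ∃ x ∈ T.erase e, π x = k + 1 := by
      constructor
      · rintro ⟨x, hx, hpx⟩
        refine ⟨x, Finset.mem_erase.mpr ⟨fun h => ?_, hx⟩, hpx⟩
        subst h; omega
      · rintro ⟨x, hx, hpx⟩
        exact ⟨x, (Finset.mem_erase.mp hx).2, hpx⟩
    rw [hfc, Finset.filter_or, Finset.card_union_of_disjoint hdisj,
      card_filter_label _ π hπ (k + 1)]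
    have e1 : (if (∃ x ∈ T.erase e, π x = k) ∧ (∃ x ∈ T.erase e, π x = k + 1)
        then (-1 : ℤ) else 1) = 1 := if_neg (fun h => hS1 h.1)
    by_cases hB : ∃ x ∈ T.erase e, π x = k + 1
    · have e2 : (if (∃ x ∈ T, π x = k) ∧ (∃ x ∈ T, π x = k + 1)
          then (-1 : ℤ) else 1) = -1 := if_pos ⟨hA_T, hTS.mpr hB⟩
      have e3 : (if ∃ x ∈ T.erase e, π x = k + 1 then (1 : ℕ) else 0) = 1 := if_pos hB
      rw [e1, e2, e3, pow_add]; ring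
    · have e2 : (if (∃ x ∈ T, π x = k) ∧ (∃ x ∈ T, π x = k + 1)
          then (-1 : ℤ) else 1) = 1 := if_neg (fun h => hB (hTS.mp h.2))
      have e3 : (if ∃ x ∈ T.erase e, π x = k + 1 then (1 : ℕ) else 0) = 0 := if_neg hB
      rw [e1, e2, e3, add_zero]; ring
  by_cases hek1 : π e = k + 1
  · -- π e = k + 1 : new label of e is k
    have hS2 : ¬ ∃ x ∈ T.erase e, π x = k + 1 := by
      rintro ⟨x, hx, hpx⟩
      exact (Finset.mem_erase.mp hx).1 (hπ (hpx.trans hek1.symm))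
    have hB_T : ∃ x ∈ T, π x = k + 1 := ⟨e, he, hek1⟩
    have hfc : (T.erase e).filter (fun x => π x < π e)
        = (T.erase e).filter (fun x => π' x < π' e ∨ π x = k) := by
      refine Finset.filter_congr fun x hx => ?_
      have hxk1 : π x ≠ k + 1 := fun h =>
        (Finset.mem_erase.mp hx).1 (hπ (h.trans hek1.symm))
      rw [hπ', hπ', hek1, Equiv.swap_apply_right]
      by_cases hxk : π x = k
      · rw [hxk, Equiv.swap_apply_left]; simp
      · rw [Equiv.swap_apply_of_ne_of_ne hxk hxk1]; omega
    have hdisj : Disjoint ((T.erase e).filter (fun x => π' x < π' e))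
        ((T.erase e).filter (fun x => π x = k)) := by
      rw [Finset.disjoint_left]
      intro x hx hx'
      simp only [Finset.mem_filter] at hx hx'
      have h1 : π' x = k + 1 := by rw [hπ', hx'.2, Equiv.swap_apply_left]
      have h2 : π' e = k := by rw [hπ', hek1, Equiv.swap_apply_right]
      omega
    have hTS : (∃ x ∈ T, π x = k) ↔ ∃ x ∈ T.erase e, π x = k := by
      constructor
      · rintro ⟨x, hx, hpx⟩
        refine ⟨x, Finset.mem_erase.mpr ⟨fun h => ?_, hx⟩, hpx⟩
        subst h; omega
      · rintro ⟨x, hx, hpx⟩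
        exact ⟨x, (Finset.mem_erase.mp hx).2, hpx⟩
    rw [hfc, Finset.filter_or, Finset.card_union_of_disjoint hdisj,
      card_filter_label _ π hπ k]
    have e1 : (if (∃ x ∈ T.erase e, π x = k) ∧ (∃ x ∈ T.erase e, π x = k + 1)
        then (-1 : ℤ) else 1) = 1 := if_neg (fun h => hS2 h.2)
    by_cases hA : ∃ x ∈ T.erase e, π x = k
    · have e2 : (if (∃ x ∈ T, π x = k) ∧ (∃ x ∈ T, π x = k + 1)
          then (-1 : ℤ) else 1) = -1 := if_pos ⟨hTS.mpr hA, hB_T⟩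
      have e3 : (if ∃ x ∈ T.erase e, π x = k then (1 : ℕ) else 0) = 1 := if_pos hA
      rw [e1, e2, e3, pow_add]; ring
    · have e2 : (if (∃ x ∈ T, π x = k) ∧ (∃ x ∈ T, π x = k + 1)
          then (-1 : ℤ) else 1) = 1 := if_neg (fun h => hA (hTS.mp h.1))
      have e3 : (if ∃ x ∈ T.erase e, π x = k then (1 : ℕ) else 0) = 0 := if_neg hA
      rw [e1, e2, e3, add_zero]; ring
  · -- π e ∉ {k, k+1}
    have hfc : (T.erase e).filter (fun x => π' x < π' e)
        = (T.erase e).filter (fun x => π x < π e) := by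
      refine Finset.filter_congr fun x hx => ?_
      rw [hπ', hπ']
      exact swap_succ_lt_iff k (π x) (π e) hek hek1
    have hTS : ∀ m, π e ≠ m → ((∃ x ∈ T, π x = m) ↔ ∃ x ∈ T.erase e, π x = m) := by
      intro m hm
      constructor
      · rintro ⟨x, hx, hpx⟩
        refine ⟨x, Finset.mem_erase.mpr ⟨fun h => hm (h ▸ hpx), hx⟩, hpx⟩
      · rintro ⟨x, hx, hpx⟩
        exact ⟨x, (Finset.mem_erase.mp hx).2, hpx⟩
    have h1 := hTS k hek
    have h2 := hTS (k + 1) hek1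
    rw [hfc]
    have hiff : ((∃ x ∈ T, π x = k) ∧ (∃ x ∈ T, π x = k + 1)) ↔
        ((∃ x ∈ T.erase e, π x = k) ∧ (∃ x ∈ T.erase e, π x = k + 1)) :=
      and_congr h1 h2
    by_cases hA : (∃ x ∈ T.erase e, π x = k) ∧ (∃ x ∈ T.erase e, π x = k + 1)
    · rw [if_pos hA, if_pos (hiff.mpr hA)]; ring
    · rw [if_neg hA, if_neg (fun h => hA (hiff.mp h))]; ring

open Multigraph in
/-- The Yamada complex does not depend on the ordering of the edges: for the
relabelling `π' = (k, k+1) ∘ π` by an adjacent transposition, the map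
`f : C^i(G) → C^i(G_σ)` from `relabelMap` is an isomorphism of cochain
complexes (it is bijective and commutes with the differentials). -/
theorem relabelMap_iso (G : Multigraph) (π : G.E → ℕ) (hπ : Function.Injective π)
    (k : ℕ) (π' : G.E → ℕ) (hπ' : π' = (Equiv.swap k (k + 1)) ∘ π) (i : ℕ) :
    Function.Bijective (G.relabelMap π k i) ∧
      (G.relabelMap π k (i + 1)).comp (G.diff π i) =
        (G.diff π' i).comp (G.relabelMap π k i) := by
  constructor
  · have hinv : ∀ φ, G.relabelMap π k i (G.relabelMap π k i φ) = φ := by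
      intro φ; funext T
      simp only [relabelMap, LinearMap.pi_apply, LinearMap.smul_apply,
        LinearMap.proj_apply]
      split_ifs with h <;> simp
    exact Function.bijective_iff_has_inverse.mpr ⟨_, hinv, hinv⟩
  · apply LinearMap.ext; intro φ
    funext T
    simp only [LinearMap.comp_apply, relabelMap, diff, LinearMap.pi_apply,
      LinearMap.smul_apply, LinearMap.proj_apply, LinearMap.sum_apply,
      Finset.smul_sum]
    refine Finset.sum_congr rfl fun e _ => ?_
    rw [map_smul, smul_smul,
      key_sign π π' hπ k (fun x => by rw [hπ']; rfl) T.1 e.1 e.2]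
    exact (smul_smul _ _ _).symm
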